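/- Let k ≥ 2. If |Av_n(μ)| ≍ n^{k−1}·(log n)^ℓ for some integer ℓ ≥ 1 (i.e., the counting sequence is bounded above and below by positive constant multiples of n^{k−1} log^ℓ n for large n), then the generating function Σ_{n≥0} |Av_n(μ)| zⁿ is not a rational function. More generally: no integer sequence (aₙ) satisfying aₙ ≍ n^{k−1} log^ℓ n with ℓ ≥ 1 has a rational generating function. -/

import Mathlib

open Filter Finset Polynomial

lemma aux_tsum_poly (r : Polynomial ℝ) (x : ℝ) : ∑' n, r.coeff n * x ^ n = r.eval x := by
  rw [tsum_eq_sum (s := Finset.range (r.natDegree + 1)) (fun b hb => by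
    rw [Polynomial.coeff_eq_zero_of_natDegree_lt, zero_mul]
    simpa using Nat.lt_of_succ_le (le_of_not_gt (by simpa using hb)))]
  rw [Polynomial.eval_eq_sum_range]

lemma aux_pow_le_choose (k n : ℕ) : (n:ℝ)^k ≤ (k.factorial : ℝ) * ((n+k).choose k) := by
  have h := Nat.pow_le_choose (α := ℝ) k (n + k)
  rw [div_le_iff₀ (by positivity)] at h
  have h2 : ((n + k + 1 - k : ℕ) : ℝ) ^ k = ((n+1:ℕ):ℝ)^k := by
    congr 2
    omega
  calc (n:ℝ)^k ≤ ((n+1:ℕ):ℝ)^k := by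
        apply pow_le_pow_left₀ (by positivity); push_cast; linarith
    _ ≤ _ := by rw [← h2]; linarith [h]

lemma aux_hasSum_choose {x : ℝ} (hx : |x| < 1) (K : ℕ) :
    HasSum (fun n => ((n.choose K : ℝ)) * x ^ n) (x^K / (1-x)^(K+1)) := by
  have h := hasSum_choose_mul_geometric_of_norm_lt_one (𝕜 := ℝ) K (r := x) (by simpa using hx)
  have h2 := h.mul_left (x^K)
  have h3 : HasSum (fun n => (((n + K).choose K : ℝ)) * x ^ (n + K))
      (x ^ K * (1 / (1 - x) ^ (K + 1))) := by
    convert h2 using 2 with n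
    rfl
    rw [pow_add]; ring
  have h4 := (hasSum_nat_add_iff (f := fun n => ((n.choose K : ℝ)) * x ^ n) K).mp h3
  have h5 : ∑ i ∈ Finset.range K, ((i.choose K : ℝ)) * x ^ i = 0 := by
    apply Finset.sum_eq_zero
    intro i hi
    rw [Nat.choose_eq_zero_of_lt (Finset.mem_range.mp hi)]
    simp
  rw [h5, add_zero] at h4
  convert h4 using 1
  rfl
  ring

set_option maxHeartbeats 16000000 in
theorem stmt_19 (k ℓ : ℕ) (hk : 2 ≤ k) (hℓ : 1 ≤ ℓ) (a : ℕ → ℤ)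
    (hgrowth : ∃ c₁ c₂ : ℝ, 0 < c₁ ∧ 0 < c₂ ∧ ∃ N : ℕ, ∀ n ≥ N,
      c₁ * (n : ℝ) ^ (k - 1) * Real.log n ^ ℓ ≤ (a n : ℝ) ∧
      (a n : ℝ) ≤ c₂ * (n : ℝ) ^ (k - 1) * Real.log n ^ ℓ) :
    ¬ ∃ p q : Polynomial ℚ, q ≠ 0 ∧
      (PowerSeries.mk fun n => (a n : ℚ)) * (q : PowerSeries ℚ) = (p : PowerSeries ℚ) := by
  obtain ⟨c₁, c₂, hc₁, hc₂, N, hN⟩ := hgrowth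
  rintro ⟨p, q, hq, hpq⟩
  set K := k - 1 with hK
  have hKk : K + 1 = k := by omega
  set N₁ := max N 3 with hN₁def
  -- basic log facts on n ≥ N₁
  have hlog1 : ∀ n : ℕ, n ≥ N₁ → 1 ≤ Real.log n := by
    intro n hn
    have h3 : (3:ℝ) ≤ n := by
      have : 3 ≤ n := le_trans (le_max_right _ _) hn
      exact_mod_cast this
    have := Real.exp_one_lt_d9
    calc (1:ℝ) = Real.log (Real.exp 1) := by rw [Real.log_exp]
      _ ≤ Real.log n := Real.log_le_log (Real.exp_pos 1) (by linarith)
  have haLB : ∀ n : ℕ, n ≥ N₁ → c₁ * (n:ℝ)^K * Real.log n ≤ (a n : ℝ) := by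
    intro n hn
    have h1 := (hN n (le_trans (le_max_left _ _) hn)).1
    have h2 : Real.log n ≤ Real.log n ^ ℓ :=
      le_self_pow₀ (hlog1 n hn) (by omega)
    have hnn : (0:ℝ) ≤ c₁ * (n:ℝ)^K := by positivity
    nlinarith [hnn]
  have haPos : ∀ n : ℕ, n ≥ N₁ → 0 ≤ (a n : ℝ) := by
    intro n hn
    have := haLB n hn
    have hl := hlog1 n hn
    have h3 : 3 ≤ n := le_trans (le_max_right _ _) hn
    have hn0 : (0:ℝ) < (n:ℝ)^K := by positivity
    nlinarith [mul_pos (mul_pos hc₁ hn0) (lt_of_lt_of_le one_pos hl)]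
  have haUB : ∀ n : ℕ, n ≥ N₁ → |(a n : ℝ)| ≤ c₂ * (n:ℝ)^(K + ℓ) := by
    intro n hn
    have h1 := (hN n (le_trans (le_max_left _ _) hn)).2
    have hl := hlog1 n hn
    have hnR : (1:ℝ) ≤ (n:ℝ) := by
      have : 3 ≤ n := le_trans (le_max_right _ _) hn
      have : (3:ℝ) ≤ n := by exact_mod_cast this
      linarith
    have hlogn : Real.log n ≤ n := by
      have := Real.log_le_sub_one_of_pos (x := n) (by linarith)
      linarith
    have h2 : Real.log n ^ ℓ ≤ (n:ℝ)^ℓ :=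
      pow_le_pow_left₀ (by linarith) hlogn ℓ
    rw [abs_of_nonneg (haPos n hn), pow_add]
    calc (a n : ℝ) ≤ c₂ * (n:ℝ)^K * Real.log n ^ ℓ := h1
      _ ≤ c₂ * (n:ℝ)^K * (n:ℝ)^ℓ := by
          exact mul_le_mul_of_nonneg_left h2 (mul_nonneg hc₂.le (by positivity))
      _ = c₂ * ((n:ℝ)^K * (n:ℝ)^ℓ) := by ring
  -- summability
  have hsumabs : ∀ x : ℝ, x ∈ Set.Ioo (0:ℝ) 1 → Summable (fun n => ‖(a n:ℝ) * x ^ n‖) := by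
    intro x hx
    apply Summable.of_norm_bounded_eventually_nat (g := fun n => c₂ * ((n:ℝ)^(K+ℓ) * x ^ n))
    · exact (summable_pow_mul_geometric_of_norm_lt_one (K+ℓ)
        (r := x) (by rw [Real.norm_eq_abs, abs_of_pos hx.1]; exact hx.2)).mul_left c₂
    · filter_upwards [eventually_ge_atTop N₁] with n hn
      rw [norm_norm, norm_mul, norm_pow, Real.norm_eq_abs, Real.norm_eq_abs,
        abs_of_pos hx.1]
      have := haUB n hn
      have hxp : (0:ℝ) ≤ x ^ n := pow_nonneg hx.1.le n
      calc |(a n:ℝ)| * x ^ n ≤ (c₂ * (n:ℝ)^(K+ℓ)) * x ^ n := by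
            apply mul_le_mul_of_nonneg_right this hxp
        _ = c₂ * ((n:ℝ)^(K+ℓ) * x ^ n) := by ring
  have hsum : ∀ x : ℝ, x ∈ Set.Ioo (0:ℝ) 1 → Summable (fun n => (a n:ℝ) * x ^ n) :=
    fun x hx => (hsumabs x hx).of_norm
  set F : ℝ → ℝ := fun x => ∑' n, (a n:ℝ) * x ^ n with hFdef
  -- map polynomials to ℝ
  set P : Polynomial ℝ := p.map (algebraMap ℚ ℝ) with hPdef
  set Q : Polynomial ℝ := q.map (algebraMap ℚ ℝ) with hQdef
  have hQ0 : Q ≠ 0 := by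
    simpa [hQdef, Polynomial.map_eq_zero] using hq
  -- coefficient identity
  have hcoeff : ∀ n : ℕ, ∑ kl ∈ Finset.HasAntidiagonal.antidiagonal n, (a kl.1 : ℝ) * Q.coeff kl.2
      = P.coeff n := by
    intro n
    have h := congrArg (PowerSeries.coeff (R := ℚ) n) hpq
    rw [PowerSeries.coeff_mul] at h
    simp only [PowerSeries.coeff_mk, Polynomial.coeff_coe] at h
    have h2 := congrArg (algebraMap ℚ ℝ) h
    rw [map_sum] at h2
    simp only [map_mul, map_intCast] at h2
    rw [hPdef, hQdef]
    simp only [Polynomial.coeff_map]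
    exact h2
  -- analytic identity
  have hFQ : ∀ x : ℝ, x ∈ Set.Ioo (0:ℝ) 1 → F x * Q.eval x = P.eval x := by
    intro x hx
    have hf := hsumabs x hx
    have hg : Summable (fun n => ‖Q.coeff n * x ^ n‖) := by
      apply summable_of_ne_finset_zero (s := Finset.range (Q.natDegree + 1))
      intro b hb
      rw [Polynomial.coeff_eq_zero_of_natDegree_lt, zero_mul, norm_zero]
      simpa using Nat.lt_of_succ_le (le_of_not_gt (by simpa using hb))
    have key := tsum_mul_tsum_eq_tsum_sum_antidiagonal_of_summable_norm
      (f := fun n => (a n:ℝ) * x ^ n) (g := fun n => Q.coeff n * x ^ n) hf hg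
    have hinner : ∀ n : ℕ, ∑ kl ∈ Finset.HasAntidiagonal.antidiagonal n,
        ((a kl.1:ℝ) * x ^ kl.1) * (Q.coeff kl.2 * x ^ kl.2) = P.coeff n * x ^ n := by
      intro n
      rw [← hcoeff n, Finset.sum_mul]
      apply Finset.sum_congr rfl
      intro kl hkl
      have hkl2 := Finset.HasAntidiagonal.mem_antidiagonal.mp hkl
      rw [← hkl2, pow_add]
      ring
    have hmain : F x * Q.eval x = ∑' n, P.coeff n * x ^ n := by
      rw [hFdef]
      simp only
      rw [← aux_tsum_poly Q x, key]
      exact tsum_congr hinner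
    rw [hmain, aux_tsum_poly P x]
  -- lower bound
  have hLB : ∀ A : ℝ, ∀ᶠ x in nhdsWithin (1:ℝ) (Set.Iio 1),
      x ∈ Set.Ioo (0:ℝ) 1 ∧ A ≤ F x * (1-x)^k := by
    intro A
    set B := |A| + 1 with hB
    have hBpos : 0 < B := by positivity
    obtain ⟨n₀, hn₀N, hn₀log⟩ : ∃ n₀ : ℕ, N₁ ≤ n₀ ∧ 8 * B ≤ c₁ * Real.log n₀ := by
      refine ⟨max N₁ (⌈Real.exp (8*B/c₁)⌉₊ + 1), le_max_left _ _, ?_⟩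
      have h1 : Real.exp (8*B/c₁) ≤ ((max N₁ (⌈Real.exp (8*B/c₁)⌉₊ + 1) : ℕ) : ℝ) := by
        calc Real.exp (8*B/c₁) ≤ (⌈Real.exp (8*B/c₁)⌉₊ : ℝ) := Nat.le_ceil _
          _ ≤ _ := by
            have : (⌈Real.exp (8*B/c₁)⌉₊ : ℕ) ≤ max N₁ (⌈Real.exp (8*B/c₁)⌉₊ + 1) := by omega
            exact_mod_cast this
      have h2 : 8*B/c₁ ≤ Real.log ((max N₁ (⌈Real.exp (8*B/c₁)⌉₊ + 1) : ℕ) : ℝ) := by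
        rw [Real.le_log_iff_exp_le (lt_of_lt_of_le (Real.exp_pos _) h1)]
        exact h1
      rw [div_le_iff₀ hc₁] at h2
      linarith
    set L := Real.log n₀ with hLdef
    have hL1 : 1 ≤ L := hlog1 n₀ hn₀N
    set D := ∑ n ∈ Finset.range n₀, |(a n : ℝ)| with hD
    have hDnn : 0 ≤ D := Finset.sum_nonneg fun i _ => abs_nonneg _
    set D₂ := ∑ n ∈ Finset.range n₀, ((n.choose K : ℕ) : ℝ) with hD₂
    have hD₂nn : 0 ≤ D₂ := Finset.sum_nonneg fun i _ => Nat.cast_nonneg _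
    have hpoint : ∀ x : ℝ, x ∈ Set.Ioo (0:ℝ) 1 →
        -(D * (1-x)^k) + c₁ * L * x^K - c₁ * L * D₂ * (1-x)^k ≤ F x * (1-x)^k := by
      intro x hx
      have hx0 : 0 < x := hx.1
      have hx1 : 0 < 1 - x := by linarith [hx.2]
      have hxabs : |x| < 1 := by rw [abs_of_pos hx0]; exact hx.2
      have hxpow1 : ∀ n : ℕ, x ^ n ≤ 1 := fun n =>
        pow_le_one₀ hx0.le (by linarith [hx.2])
      have hS := aux_hasSum_choose hxabs K
      -- head lower bound
      have hhead : -D ≤ ∑ n ∈ Finset.range n₀, (a n : ℝ) * x ^ n := by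
        rw [hD, ← Finset.sum_neg_distrib]
        apply Finset.sum_le_sum
        intro i _
        have h1 : |(a i : ℝ) * x ^ i| ≤ |(a i : ℝ)| := by
          rw [abs_mul, abs_pow, abs_of_pos hx0]
          nlinarith [abs_nonneg ((a i : ℝ)), hxpow1 i, pow_nonneg hx0.le i]
        linarith [neg_abs_le ((a i : ℝ) * x ^ i), abs_nonneg ((a i : ℝ) * x ^ i)]
      -- tail lower bound
      have hsum1 := hsum x hx
      have hsumchoose : Summable (fun n => ((n.choose K : ℕ) : ℝ) * x ^ n) := hS.summable
      have htail : c₁ * L * (∑' n : ℕ, ((((n + n₀).choose K : ℕ)) : ℝ) * x ^ (n + n₀))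
          ≤ ∑' n : ℕ, (a (n + n₀) : ℝ) * x ^ (n + n₀) := by
        rw [← tsum_mul_left]
        apply Summable.tsum_le_tsum _ (((summable_nat_add_iff n₀).mpr hsumchoose).mul_left (c₁ * L))
          ((summable_nat_add_iff n₀).mpr hsum1)
        intro n
        have hge : N₁ ≤ n + n₀ := le_trans hn₀N (by omega)
        have hch : ((((n + n₀).choose K : ℕ)) : ℝ) ≤ ((n + n₀ : ℕ) : ℝ) ^ K := by
          have := Nat.choose_le_pow (n + n₀) K
          calc ((((n + n₀).choose K : ℕ)) : ℝ) ≤ (((n + n₀)^K : ℕ) : ℝ) := by exact_mod_cast this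
            _ = ((n + n₀ : ℕ) : ℝ) ^ K := by push_cast; ring
        have hlmono : L ≤ Real.log ((n + n₀ : ℕ) : ℝ) := by
          rw [hLdef]
          apply Real.log_le_log
          · have h3 : 3 ≤ n₀ := le_trans (le_max_right _ _) hn₀N
            have : (3:ℝ) ≤ (n₀:ℝ) := by exact_mod_cast h3
            linarith
          · exact_mod_cast Nat.le_add_left n₀ n
        have hA := haLB (n + n₀) hge
        have hxp : (0:ℝ) ≤ x ^ (n + n₀) := pow_nonneg hx0.le _
        have hck : c₁ * L * ((((n + n₀).choose K : ℕ)) : ℝ) ≤ (a (n + n₀) : ℝ) := by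
          have hpk : (0:ℝ) ≤ ((n + n₀ : ℕ) : ℝ) ^ K := by positivity
          calc c₁ * L * ((((n + n₀).choose K : ℕ)) : ℝ)
              ≤ c₁ * L * (((n + n₀ : ℕ)) : ℝ) ^ K := by
                apply mul_le_mul_of_nonneg_left hch (by positivity)
            _ ≤ c₁ * Real.log ((n + n₀ : ℕ) : ℝ) * (((n + n₀ : ℕ)) : ℝ) ^ K := by
                have hm := mul_le_mul_of_nonneg_right hlmono (mul_nonneg hc₁.le hpk)
                nlinarith [hm]
            _ ≤ (a (n + n₀) : ℝ) := by
                calc c₁ * Real.log ((n + n₀ : ℕ) : ℝ) * (((n + n₀ : ℕ)) : ℝ) ^ K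
                    = c₁ * (((n + n₀ : ℕ)) : ℝ) ^ K * Real.log ((n + n₀ : ℕ) : ℝ) := by ring
                  _ ≤ _ := hA
        calc c₁ * L * (((((n + n₀).choose K : ℕ)) : ℝ) * x ^ (n + n₀))
            = (c₁ * L * ((((n + n₀).choose K : ℕ)) : ℝ)) * x ^ (n + n₀) := by ring
          _ ≤ (a (n + n₀) : ℝ) * x ^ (n + n₀) := mul_le_mul_of_nonneg_right hck hxp
      -- tail choose sum value
      have hsplitc := Summable.sum_add_tsum_nat_add (f := fun n => ((n.choose K : ℕ) : ℝ) * x ^ n)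
        n₀ hsumchoose
      have hheadc : ∑ n ∈ Finset.range n₀, ((n.choose K : ℕ) : ℝ) * x ^ n ≤ D₂ := by
        rw [hD₂]
        apply Finset.sum_le_sum
        intro i _
        nlinarith [hxpow1 i, pow_nonneg hx0.le i, Nat.cast_nonneg (α := ℝ) (i.choose K)]
      have hctail : x^K / (1-x)^(K+1) - D₂ ≤
          ∑' n : ℕ, ((((n + n₀).choose K : ℕ)) : ℝ) * x ^ (n + n₀) := by
        rw [hS.tsum_eq] at hsplitc
        linarith
      -- combine
      have hsplit := Summable.sum_add_tsum_nat_add (f := fun n => (a n : ℝ) * x ^ n) n₀ hsum1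
      have hFge : -D + c₁ * L * (x^K / (1-x)^(K+1) - D₂) ≤ F x := by
        rw [hFdef]
        simp only
        rw [← hsplit]
        have hcLnn : (0:ℝ) ≤ c₁ * L := by positivity
        have := mul_le_mul_of_nonneg_left hctail hcLnn
        linarith [htail, hhead, this]
      have hkpow : (0:ℝ) < (1-x)^k := pow_pos hx1 k
      have hdivmul : (x^K / (1-x)^(K+1)) * (1-x)^k = x^K := by
        rw [hKk]
        field_simp
      have := mul_le_mul_of_nonneg_right hFge hkpow.le
      calc -(D * (1-x)^k) + c₁ * L * x^K - c₁ * L * D₂ * (1-x)^k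
          = (-D + c₁ * L * (x^K / (1-x)^(K+1) - D₂)) * (1-x)^k
            + c₁ * L * (x^K - (x^K / (1-x)^(K+1)) * (1-x)^k) := by ring
        _ = (-D + c₁ * L * (x^K / (1-x)^(K+1) - D₂)) * (1-x)^k := by
            rw [hdivmul]; ring
        _ ≤ F x * (1-x)^k := this
    -- eventual bounds
    have hIoo : ∀ᶠ x in nhdsWithin (1:ℝ) (Set.Iio 1), x ∈ Set.Ioo (0:ℝ) 1 := by
      have hmem := Ioo_mem_nhdsLT_of_mem (by norm_num : (1:ℝ) ∈ Set.Ioc (0:ℝ) 1)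
      exact Filter.eventually_iff.mpr hmem
    have htD : Filter.Tendsto (fun x : ℝ => D * (1-x)^k) (nhdsWithin (1:ℝ) (Set.Iio 1))
        (nhds 0) := by
      apply tendsto_nhdsWithin_of_tendsto_nhds
      have hcont : Continuous (fun x : ℝ => D * (1-x)^k) := by continuity
      have := hcont.tendsto 1
      simpa [zero_pow (by omega : k ≠ 0)] using this
    have htD₂ : Filter.Tendsto (fun x : ℝ => c₁ * L * D₂ * (1-x)^k)
        (nhdsWithin (1:ℝ) (Set.Iio 1)) (nhds 0) := by
      apply tendsto_nhdsWithin_of_tendsto_nhds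
      have hcont : Continuous (fun x : ℝ => c₁ * L * D₂ * (1-x)^k) := by continuity
      have := hcont.tendsto 1
      simpa [zero_pow (by omega : k ≠ 0)] using this
    have htx : Filter.Tendsto (fun x : ℝ => x^K) (nhdsWithin (1:ℝ) (Set.Iio 1)) (nhds 1) := by
      apply tendsto_nhdsWithin_of_tendsto_nhds
      have := (continuous_pow K).tendsto (1:ℝ)
      simpa using this
    filter_upwards [hIoo, htD.eventually_lt_const hBpos, htD₂.eventually_lt_const hBpos,
      htx.eventually_const_lt (by norm_num : (1:ℝ)/2 < 1)] with x hxIoo hxD hxD₂ hxK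
    refine ⟨hxIoo, ?_⟩
    have hpt := hpoint x hxIoo
    have hcL : 8 * B ≤ c₁ * L := hn₀log
    have hxKnn : (0:ℝ) ≤ x^K := pow_nonneg hxIoo.1.le K
    have h1 : 4 * B ≤ c₁ * L * x^K := by nlinarith
    have hAB : A ≤ 2 * B := by
      rw [hB]
      cases abs_cases A with
      | inl h => linarith [h.1]
      | inr h => linarith [h.1, abs_nonneg A]
    nlinarith
  -- upper bound
  have hUB : ∀ ε : ℝ, 0 < ε → ∀ᶠ x in nhdsWithin (1:ℝ) (Set.Iio 1),
      F x * (1-x)^(k+1) ≤ ε := by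
    intro ε hε
    set ε' := ε / (2 * ((k.factorial : ℝ) + 1)) with hε'def
    have hfacpos : (0:ℝ) < (k.factorial : ℝ) := by
      exact_mod_cast k.factorial_pos
    have hε'pos : 0 < ε' := by positivity
    have htend : Filter.Tendsto (fun n : ℕ => c₂ * (Real.log n ^ ℓ / n)) Filter.atTop
        (nhds 0) := by
      have h := Real.tendsto_pow_log_div_mul_add_atTop 1 0 ℓ one_ne_zero
      simp only [one_mul, add_zero] at h
      have h2 := (h.comp (tendsto_natCast_atTop_atTop (R := ℝ))).const_mul c₂
      simpa using h2
    have hev : ∀ᶠ n : ℕ in Filter.atTop, c₂ * (Real.log n ^ ℓ / n) < ε' :=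
      htend.eventually_lt_const hε'pos
    obtain ⟨N₂', hN₂'⟩ := Filter.eventually_atTop.mp hev
    set N₂ := max N₂' (N₁ + 1) with hN₂def
    have haU : ∀ n : ℕ, N₂ ≤ n → (a n : ℝ) ≤ ε' * (n:ℝ)^k := by
      intro n hn
      have hn1 : N₁ ≤ n := by
        have := le_trans (le_max_right N₂' (N₁+1)) hn
        omega
      have hn3 : 3 ≤ N₁ := le_max_right _ _
      have hnpos : 0 < n := by omega
      have hup := (hN n (le_trans (le_max_left _ _) hn1)).2
      have h2 := hN₂' n (le_trans (le_max_left _ _) hn)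
      have hnR : (0:ℝ) < n := by exact_mod_cast hnpos
      have key : c₂ * (n:ℝ)^K * Real.log n ^ ℓ = (c₂ * (Real.log n ^ ℓ / n)) * (n:ℝ)^k := by
        rw [← hKk]
        field_simp
        ring
      rw [key] at hup
      have hpk : (0:ℝ) ≤ (n:ℝ)^k := by positivity
      nlinarith [mul_le_mul_of_nonneg_right h2.le hpk]
    set D' := ∑ n ∈ Finset.range N₂, |(a n : ℝ)| with hD'
    have hD'nn : 0 ≤ D' := Finset.sum_nonneg fun i _ => abs_nonneg _
    have hpoint : ∀ x : ℝ, x ∈ Set.Ioo (0:ℝ) 1 →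
        F x ≤ D' + ε' * (k.factorial : ℝ) * (1/(1-x)^(k+1)) := by
      intro x hx
      have hx0 : 0 < x := hx.1
      have hx1 : 0 < 1 - x := by linarith [hx.2]
      have hxabs : |x| < 1 := by rw [abs_of_pos hx0]; exact hx.2
      have hxpow1 : ∀ n : ℕ, x ^ n ≤ 1 := fun n =>
        pow_le_one₀ hx0.le (by linarith [hx.2])
      have hsum1 := hsum x hx
      have hsplit := Summable.sum_add_tsum_nat_add (f := fun n => (a n : ℝ) * x ^ n) N₂ hsum1
      have hhead : ∑ n ∈ Finset.range N₂, (a n : ℝ) * x ^ n ≤ D' := by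
        rw [hD']
        apply Finset.sum_le_sum
        intro i _
        calc (a i : ℝ) * x ^ i ≤ |(a i : ℝ) * x ^ i| := le_abs_self _
          _ = |(a i : ℝ)| * x ^ i := by rw [abs_mul, abs_pow, abs_of_pos hx0]
          _ ≤ |(a i : ℝ)| * 1 := by
              exact mul_le_mul_of_nonneg_left (hxpow1 i) (abs_nonneg _)
          _ = |(a i : ℝ)| := mul_one _
      have hgsum : Summable (fun n : ℕ => (n:ℝ)^k * x^n) :=
        summable_pow_mul_geometric_of_norm_lt_one k
          (r := x) (by simpa [Real.norm_eq_abs] using hxabs)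
      have htail : ∑' n : ℕ, (a (n+N₂) : ℝ) * x^(n+N₂)
          ≤ ε' * ∑' n : ℕ, ((n+N₂ : ℕ):ℝ)^k * x^(n+N₂) := by
        rw [← tsum_mul_left]
        apply Summable.tsum_le_tsum _ ((summable_nat_add_iff N₂).mpr hsum1)
          (((summable_nat_add_iff N₂).mpr hgsum).mul_left ε')
        intro n
        have h1 := haU (n + N₂) (by omega)
        have hxp : (0:ℝ) ≤ x ^ (n + N₂) := pow_nonneg hx0.le _
        calc (a (n+N₂) : ℝ) * x^(n+N₂) ≤ (ε' * ((n+N₂ : ℕ):ℝ)^k) * x^(n+N₂) :=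
              mul_le_mul_of_nonneg_right h1 hxp
          _ = ε' * (((n+N₂ : ℕ):ℝ)^k * x^(n+N₂)) := by ring
      have htail2 : ∑' n : ℕ, ((n+N₂ : ℕ):ℝ)^k * x^(n+N₂) ≤ ∑' n : ℕ, (n:ℝ)^k * x^n := by
        have hsplitg := Summable.sum_add_tsum_nat_add (f := fun n => (n:ℝ)^k * x^n) N₂ hgsum
        have hheadg : 0 ≤ ∑ n ∈ Finset.range N₂, (n:ℝ)^k * x^n :=
          Finset.sum_nonneg fun i _ => mul_nonneg (by positivity) (pow_nonneg hx0.le i)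
        push_cast
        push_cast at hsplitg
        linarith
      have hgval : ∑' n : ℕ, (n:ℝ)^k * x^n ≤ (k.factorial : ℝ) * (1/(1-x)^(k+1)) := by
        have hc := hasSum_choose_mul_geometric_of_norm_lt_one (𝕜 := ℝ) k
          (r := x) (by simpa [Real.norm_eq_abs] using hxabs)
        have hcs : Summable (fun n : ℕ => (((n+k).choose k : ℕ) : ℝ) * x^n) := hc.summable
        have hcomp := Summable.tsum_le_tsum (f := fun n : ℕ => (n:ℝ)^k * x^n)
          (g := fun n : ℕ => (k.factorial : ℝ) * ((((n+k).choose k : ℕ) : ℝ) * x^n))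
          (fun n => by
            have := aux_pow_le_choose k n
            have hxp : (0:ℝ) ≤ x ^ n := pow_nonneg hx0.le n
            calc (n:ℝ)^k * x^n ≤ ((k.factorial : ℝ) * (((n+k).choose k : ℕ) : ℝ)) * x^n :=
                  mul_le_mul_of_nonneg_right this hxp
              _ = (k.factorial : ℝ) * ((((n+k).choose k : ℕ) : ℝ) * x^n) := by ring)
          hgsum (hcs.mul_left _)
        rw [tsum_mul_left, hc.tsum_eq] at hcomp
        exact hcomp
      have hε'nn : (0:ℝ) ≤ ε' := hε'pos.le
      have hF : F x = (∑ n ∈ Finset.range N₂, (a n : ℝ) * x ^ n)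
          + ∑' n : ℕ, (a (n+N₂) : ℝ) * x^(n+N₂) := by
        rw [hFdef]
        simp only
        rw [← hsplit]
      rw [hF]
      have hchain : ∑' n : ℕ, (a (n+N₂) : ℝ) * x^(n+N₂)
          ≤ ε' * ((k.factorial : ℝ) * (1/(1-x)^(k+1))) := by
        calc ∑' n : ℕ, (a (n+N₂) : ℝ) * x^(n+N₂)
            ≤ ε' * ∑' n : ℕ, ((n+N₂ : ℕ):ℝ)^k * x^(n+N₂) := htail
          _ ≤ ε' * ∑' n : ℕ, (n:ℝ)^k * x^n := mul_le_mul_of_nonneg_left htail2 hε'nn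
          _ ≤ ε' * ((k.factorial : ℝ) * (1/(1-x)^(k+1))) :=
              mul_le_mul_of_nonneg_left hgval hε'nn
      linarith [hchain, hhead]
    have hIoo : ∀ᶠ x in nhdsWithin (1:ℝ) (Set.Iio 1), x ∈ Set.Ioo (0:ℝ) 1 := by
      have hmem := Ioo_mem_nhdsLT_of_mem (by norm_num : (1:ℝ) ∈ Set.Ioc (0:ℝ) 1)
      exact Filter.eventually_iff.mpr hmem
    have htD : Filter.Tendsto (fun x : ℝ => D' * (1-x)^(k+1) : ℝ → ℝ) (nhdsWithin (1:ℝ) (Set.Iio 1))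
        (nhds 0) := by
      apply tendsto_nhdsWithin_of_tendsto_nhds
      have hcont : Continuous (fun x : ℝ => D' * (1-x)^(k+1) : ℝ → ℝ) := by continuity
      have := hcont.tendsto 1
      simpa [zero_pow (by omega : k + 1 ≠ 0)] using this
    filter_upwards [hIoo, htD.eventually_lt_const (by linarith : (0:ℝ) < ε/2)]
      with x hxIoo hxD
    have hx1 : 0 < 1 - x := by linarith [hxIoo.2]
    have hpw : (0:ℝ) < (1-x)^(k+1) := pow_pos hx1 _
    have hpt := hpoint x hxIoo
    have hmul := mul_le_mul_of_nonneg_right hpt hpw.le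
    have hone : (1/(1-x)^(k+1)) * (1-x)^(k+1) = 1 := by
      field_simp
    have heq : (D' + ε' * (k.factorial : ℝ) * (1/(1-x)^(k+1))) * (1-x)^(k+1)
        = D' * (1-x)^(k+1) + ε' * (k.factorial : ℝ) := by
      field_simp
    rw [heq] at hmul
    have hε'fac : ε' * (k.factorial : ℝ) ≤ ε/2 := by
      rw [hε'def]
      rw [div_mul_eq_mul_div, div_le_iff₀ (by positivity)]
      nlinarith
    linarith
  -- p ≠ 0
  have hp0 : P ≠ 0 := by
    intro h
    have hpq0 : p = 0 := by
      rw [hPdef, Polynomial.map_eq_zero] at h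
      exact h
    rw [hpq0] at hpq
    rw [Polynomial.coe_zero] at hpq
    rcases mul_eq_zero.mp hpq with h1 | h2
    · have h3 := congrArg (PowerSeries.coeff (R := ℚ) N₁) h1
      simp only [PowerSeries.coeff_mk, map_zero] at h3
      have h4 : (a N₁ : ℝ) = 0 := by exact_mod_cast h3
      have h5 := haLB N₁ (le_refl _)
      have h6 := hlog1 N₁ (le_refl _)
      have h7 : 3 ≤ N₁ := le_max_right _ _
      have h8 : (0:ℝ) < (N₁:ℝ)^K := by positivity
      nlinarith [mul_pos (mul_pos hc₁ h8) (lt_of_lt_of_le one_pos h6)]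
    · exact hq (by simpa [Polynomial.coe_eq_zero_iff] using h2)
  -- factorization
  obtain ⟨R, hR, hRnd⟩ := Q.exists_eq_pow_rootMultiplicity_mul_and_not_dvd hQ0 1
  obtain ⟨T, hT, hTnd⟩ := P.exists_eq_pow_rootMultiplicity_mul_and_not_dvd hp0 1
  set m := Q.rootMultiplicity 1 with hm
  set s := P.rootMultiplicity 1 with hs
  have hR1 : R.eval 1 ≠ 0 := fun h => hRnd (Polynomial.dvd_iff_isRoot.mpr h)
  have hT1 : T.eval 1 ≠ 0 := fun h => hTnd (Polynomial.dvd_iff_isRoot.mpr h)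
  set C1 : ℝ := (|T.eval 1|/2) / (2 * |R.eval 1|) with hC1
  set C2 : ℝ := (2 * |T.eval 1|) / (|R.eval 1|/2) with hC2
  have hC1pos : 0 < C1 := by
    have := abs_pos.mpr hR1; have := abs_pos.mpr hT1; positivity
  have hC2pos : 0 < C2 := by
    have := abs_pos.mpr hR1; have := abs_pos.mpr hT1; positivity
  -- eventual two-sided bound
  have hband : ∀ᶠ x in nhdsWithin (1:ℝ) (Set.Iio 1),
      C1 * (1-x)^s ≤ F x * (1-x)^m ∧ F x * (1-x)^m ≤ C2 * (1-x)^s := by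
    have hcR : Filter.Tendsto (fun x : ℝ => |R.eval x|) (nhdsWithin (1:ℝ) (Set.Iio 1))
        (nhds (|R.eval 1|)) :=
      tendsto_nhdsWithin_of_tendsto_nhds ((continuous_abs.comp R.continuous).tendsto 1)
    have hcT : Filter.Tendsto (fun x : ℝ => |T.eval x|) (nhdsWithin (1:ℝ) (Set.Iio 1))
        (nhds (|T.eval 1|)) :=
      tendsto_nhdsWithin_of_tendsto_nhds ((continuous_abs.comp T.continuous).tendsto 1)
    have hR1' : (0:ℝ) < |R.eval 1| := abs_pos.mpr hR1
    have hT1' : (0:ℝ) < |T.eval 1| := abs_pos.mpr hT1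
    have e1 : ∀ᶠ x in nhdsWithin (1:ℝ) (Set.Iio 1), |R.eval 1|/2 < |R.eval x| :=
      hcR.eventually_const_lt (by linarith)
    have e2 : ∀ᶠ x in nhdsWithin (1:ℝ) (Set.Iio 1), |R.eval x| < 2 * |R.eval 1| :=
      hcR.eventually_lt_const (by linarith)
    have e3 : ∀ᶠ x in nhdsWithin (1:ℝ) (Set.Iio 1), |T.eval 1|/2 < |T.eval x| :=
      hcT.eventually_const_lt (by linarith)
    have e4 : ∀ᶠ x in nhdsWithin (1:ℝ) (Set.Iio 1), |T.eval x| < 2 * |T.eval 1| :=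
      hcT.eventually_lt_const (by linarith)
    filter_upwards [e1, e2, e3, e4, hLB 0] with x he1 he2 he3 he4 hL0
    obtain ⟨hxIoo, hF0⟩ := hL0
    have hx1 : 0 < 1 - x := by linarith [hxIoo.2]
    have hFnn : 0 ≤ F x := by
      by_contra hcon
      push_neg at hcon
      nlinarith [pow_pos hx1 k]
    have heval : F x * ((x-1)^m * R.eval x) = (x-1)^s * T.eval x := by
      have h1 := hFQ x hxIoo
      rw [hR, hT] at h1
      simpa [Polynomial.eval_mul, Polynomial.eval_pow] using h1
    have habs : F x * ((1-x)^m * |R.eval x|) = (1-x)^s * |T.eval x| := by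
      have h2 := congrArg abs heval
      rw [abs_mul, abs_mul, abs_mul, abs_pow, abs_pow, abs_of_nonneg hFnn] at h2
      rw [show |x - 1| = 1 - x by rw [abs_sub_comm]; exact abs_of_pos hx1] at h2
      linarith [h2]
    have hpowm : (0:ℝ) ≤ (1-x)^m := le_of_lt (pow_pos hx1 m)
    have hpows : (0:ℝ) < (1-x)^s := pow_pos hx1 s
    constructor
    · rw [hC1, div_mul_eq_mul_div, div_le_iff₀ (by linarith)]
      nlinarith [mul_le_mul_of_nonneg_left he2.le (mul_nonneg hFnn hpowm),
        mul_le_mul_of_nonneg_right he3.le hpows.le]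
    · rw [hC2, div_mul_eq_mul_div, le_div_iff₀ (by linarith)]
      nlinarith [mul_le_mul_of_nonneg_left he1.le (mul_nonneg hFnn hpowm),
        mul_le_mul_of_nonneg_right he4.le hpows.le]
  -- contradiction
  have hfinal : ∃ x : ℝ, x ∈ Set.Ioo (0:ℝ) 1 ∧ (2*C2+1) ≤ F x * (1-x)^k ∧
      F x * (1-x)^(k+1) ≤ C1/2 ∧
      C1 * (1-x)^s ≤ F x * (1-x)^m ∧ F x * (1-x)^m ≤ C2 * (1-x)^s := by
    have := ((hLB (2*C2+1)).and ((hUB (C1/2) (by linarith)).and hband)).exists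
    obtain ⟨x, ⟨h1, h2⟩, h3, h4, h5⟩ := this
    exact ⟨x, h1, h2, h3, h4, h5⟩
  obtain ⟨x, hx, hA, hE, hB1, hB2⟩ := hfinal
  have hx1 : 0 < 1 - x := by linarith [hx.2]
  have hx1' : 1 - x ≤ 1 := by linarith [hx.1]
  have hFpos : 0 ≤ F x := by
    nlinarith [pow_pos hx1 k, hA, hC2pos, mul_pos (pow_pos hx1 k) (by linarith : (0:ℝ) < 2*C2+1)]
  by_cases hms : m ≤ s + k
  · have h1 : (1-x)^(s+k) ≤ (1-x)^m := pow_le_pow_of_le_one (le_of_lt hx1) hx1' hms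
    have h2 : F x * (1-x)^(s+k) ≤ F x * (1-x)^m := by
      apply mul_le_mul_of_nonneg_left h1 hFpos
    have h3 : F x * (1-x)^(s+k) = (1-x)^s * (F x * (1-x)^k) := by
      rw [pow_add]; ring
    have h4 : (1-x)^s * (F x * (1-x)^k) ≤ C2 * (1-x)^s := by
      rw [← h3]; exact le_trans h2 hB2
    have h5 : F x * (1-x)^k ≤ C2 := by
      have hps : (0:ℝ) < (1-x)^s := pow_pos hx1 s
      nlinarith
    linarith
  · have hms' : s + k + 1 ≤ m := by omega
    have h1 : (1-x)^m ≤ (1-x)^(s+k+1) := pow_le_pow_of_le_one (le_of_lt hx1) hx1' hms'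
    have h2 : F x * (1-x)^m ≤ F x * (1-x)^(s+k+1) := by
      apply mul_le_mul_of_nonneg_left h1 hFpos
    have h3 : F x * (1-x)^(s+k+1) = (1-x)^s * (F x * (1-x)^(k+1)) := by
      rw [pow_add, pow_add]; ring
    have h4 : C1 * (1-x)^s ≤ (1-x)^s * (C1/2) := by
      calc C1 * (1-x)^s ≤ F x * (1-x)^m := hB1
        _ ≤ (1-x)^s * (F x * (1-x)^(k+1)) := by rw [← h3]; exact h2
        _ ≤ (1-x)^s * (C1/2) := by
            apply mul_le_mul_of_nonneg_left hE (le_of_lt (pow_pos hx1 s))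
    have hps : (0:ℝ) < (1-x)^s := pow_pos hx1 s
    nlinarith
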